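/- A continuous homomorphism from a profinite group to a complex general linear group has finite image: if G is a compact, totally disconnected topological group and ρ : G → GL_n(ℂ) is a continuous group homomorphism (for any n ≥ 0), then the range of ρ is a finite set. -/

import Mathlib

attribute [local instance] Matrix.linftyOpNormedRing Matrix.linftyOpNormedAlgebra

/-- No small subgroups for `GL_n(ℂ)`: a unit all of whose powers are within `1/2`
of the identity (in the L∞-operator norm) is the identity. -/
lemma GL_eq_one_of_pow_small (n : ℕ) (h : GL (Fin n) ℂ)
    (H : ∀ k : ℕ, ‖((h ^ k : GL (Fin n) ℂ) : Matrix (Fin n) (Fin n) ℂ) - 1‖ < 1/2) :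
    h = 1 := by
  set a : ℕ → ℝ := fun m => ‖((h ^ (2 ^ m) : GL (Fin n) ℂ) : Matrix (Fin n) (Fin n) ℂ) - 1‖
    with ha
  have key : ∀ m, (3/2 : ℝ) * a m ≤ a (m + 1) := by
    intro m
    set Y : Matrix (Fin n) (Fin n) ℂ := ((h ^ (2 ^ m) : GL (Fin n) ℂ) : Matrix (Fin n) (Fin n) ℂ) - 1 with hY
    have hYlt : ‖Y‖ < 1/2 := H _
    have hpow : ((h ^ (2 ^ (m+1)) : GL (Fin n) ℂ) : Matrix (Fin n) (Fin n) ℂ) - 1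
        = Y + Y + Y * Y := by
      have h2m : (2 : ℕ) ^ (m+1) = 2 ^ m * 2 := by ring
      rw [h2m, pow_mul, hY]
      push_cast
      noncomm_ring
    have h1 : ‖Y + Y‖ = 2 * ‖Y‖ := by
      rw [← two_smul ℝ Y, norm_smul]
      simp
    have h2 : ‖Y * Y‖ ≤ ‖Y‖ * ‖Y‖ := norm_mul_le Y Y
    have h3 : ‖Y + Y‖ ≤ ‖Y + Y + Y * Y‖ + ‖Y * Y‖ := by
      simpa using norm_sub_le (Y + Y + Y * Y) (Y * Y)
    calc (3/2 : ℝ) * a m = 2 * ‖Y‖ - (1/2) * ‖Y‖ := by simp only [ha]; ring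
      _ ≤ 2 * ‖Y‖ - ‖Y‖ * ‖Y‖ := by nlinarith [norm_nonneg Y]
      _ ≤ ‖Y + Y‖ - ‖Y * Y‖ := by rw [h1]; linarith
      _ ≤ ‖Y + Y + Y * Y‖ := by linarith
      _ = a (m + 1) := by simp only [ha]; rw [hpow]
  have growth : ∀ m, (3/2 : ℝ) ^ m * a 0 ≤ a m := by
    intro m
    induction m with
    | zero => simp
    | succ m ih =>
      have h32 : (0:ℝ) ≤ 3/2 := by norm_num
      calc (3/2 : ℝ) ^ (m+1) * a 0 = (3/2) * ((3/2) ^ m * a 0) := by ring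
        _ ≤ (3/2) * a m := by nlinarith
        _ ≤ a (m + 1) := key m
  have ha0 : a 0 = 0 := by
    by_contra h0
    have hpos : 0 < a 0 := lt_of_le_of_ne (norm_nonneg _) (Ne.symm h0)
    obtain ⟨m, hm⟩ := pow_unbounded_of_one_lt ((1/2) / a 0) (by norm_num : (1:ℝ) < 3/2)
    have : (1/2 : ℝ) < (3/2) ^ m * a 0 := by
      rw [div_lt_iff₀ hpos] at hm
      linarith
    have := (growth m).trans_lt (H (2 ^ m))
    linarith
  have : ((h ^ (2 ^ 0) : GL (Fin n) ℂ) : Matrix (Fin n) (Fin n) ℂ) - 1 = 0 :=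
    norm_eq_zero.mp ha0
  have hval : ((h : Matrix (Fin n) (Fin n) ℂ)) = 1 := by
    simpa [sub_eq_zero] using this
  exact Units.ext hval

/-- A continuous homomorphism from a profinite group (a compact, totally disconnected
topological group) to `GL_n(ℂ)` has finite image. -/
theorem finite_image_of_continuous_profinite_to_GL (G : Type) [Group G]
    [TopologicalSpace G] [IsTopologicalGroup G] [CompactSpace G] [TotallyDisconnectedSpace G]
    (n : ℕ) (ρ : G →* GL (Fin n) ℂ) (hρ : Continuous ρ) :
    (Set.range ρ).Finite := by
  haveI : T2Space G := IsTopologicalGroup.t2Space_iff_one_closed.mpr isClosed_singleton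
  -- the small neighborhood of 1 in GL
  set U : Set (GL (Fin n) ℂ) :=
    {g | ‖(g : Matrix (Fin n) (Fin n) ℂ) - 1‖ < 1/2} with hU
  have hUopen : IsOpen U := by
    have : Continuous fun g : GL (Fin n) ℂ => ‖(g : Matrix (Fin n) (Fin n) ℂ) - 1‖ :=
      continuous_norm.comp (Units.continuous_val.sub continuous_const)
    exact isOpen_lt this continuous_const
  have hUone : (1 : GL (Fin n) ℂ) ∈ U := by simp [hU]
  -- pull back to a clopen neighborhood of 1 in G
  have hpre : IsOpen (ρ ⁻¹' U) := hUopen.preimage hρ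
  have hone : (1 : G) ∈ ρ ⁻¹' U := by simpa using hUone
  obtain ⟨W, hWclopen, hWone, hWsub⟩ := compact_exists_isClopen_in_isOpen hpre hone
  obtain ⟨H, hH⟩ := IsTopologicalGroup.exist_openSubgroup_sub_clopen_nhds_of_one hWclopen hWone
  -- every element of H is in the kernel
  have hker : (H : Set G) ⊆ (ρ.ker : Set G) := by
    intro x hx
    have hxpow : ∀ k : ℕ, ‖((ρ x ^ k : GL (Fin n) ℂ) : Matrix (Fin n) (Fin n) ℂ) - 1‖ < 1/2 := by
      intro k
      have hxk : x ^ k ∈ (H : Set G) := pow_mem hx k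
      have := hWsub (hH hxk)
      simpa [hU, map_pow] using this
    exact GL_eq_one_of_pow_small n (ρ x) hxpow
  -- hence the kernel is open standard, so finite index, so finite range
  have hkeropen : IsOpen (ρ.ker : Set G) :=
    Subgroup.isOpen_of_openSubgroup ρ.ker (fun x hx => hker hx)
  haveI : Finite (G ⧸ ρ.ker) := ρ.ker.quotient_finite_of_isOpen hkeropen
  have : Set.range ρ = Set.range (QuotientGroup.kerLift ρ) := by
    ext y
    constructor
    · rintro ⟨x, rfl⟩; exact ⟨QuotientGroup.mk x, rfl⟩
    · rintro ⟨q, rfl⟩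
      obtain ⟨x, rfl⟩ := QuotientGroup.mk_surjective q
      exact ⟨x, rfl⟩
  rw [this]
  exact Set.finite_range _
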